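/- For every complex number x, ∑_{ν ∈ ℤ} (-1)^ν J_{3ν}(x) = (1/3)[1 + 2 cos(x√3/2)] and ∑_{ν ∈ ℤ} (-1)^ν J_{3ν+1}(x) = −(1/3)[1 − 2 cos(x√3/2 − π/3)]. -/

import Mathlib

open scoped Real

/-- Bessel function of the first kind of natural order `n`, via its power series. -/
noncomputable def besselJNat (n : ℕ) (x : ℂ) : ℂ :=
  ∑' m : ℕ, (-1 : ℂ) ^ m / ((m.factorial : ℂ) * ((m + n).factorial : ℂ)) * (x / 2) ^ (2 * m + n)

/-- Bessel function of the first kind of integer order, with `J_{-n} = (-1)^n J_n`. -/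
noncomputable def besselJ (n : ℤ) (x : ℂ) : ℂ :=
  if 0 ≤ n then besselJNat n.toNat x else (-1 : ℂ) ^ n.natAbs * besselJNat n.natAbs x

set_option maxHeartbeats 1000000

open Complex in

noncomputable def eAux : ℤ × ℕ ≃ ℕ × ℕ where
  toFun p := (p.2 + p.1.toNat, p.2 + (-p.1).toNat)
  invFun q := ((q.1 : ℤ) - q.2, min q.1 q.2)
  left_inv := by rintro ⟨n, m⟩; ext <;> simp <;> omega
  right_inv := by rintro ⟨j, k⟩; ext <;> simp <;> omega

lemma besselJ_hasSum (x t : ℂ) (ht : t ≠ 0) :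
    HasSum (fun n : ℤ => besselJ n x * t ^ n) (Complex.exp (x * (t - t⁻¹) / 2)) := by
  have hn1 : Summable fun j : ℕ => ‖(x * t / 2) ^ j / (j.factorial : ℂ)‖ :=
    NormedSpace.norm_expSeries_div_summable _
  have hn2 : Summable fun k : ℕ => ‖(-x / (2 * t)) ^ k / (k.factorial : ℂ)‖ :=
    NormedSpace.norm_expSeries_div_summable _
  have hF : Summable (fun p : ℕ × ℕ =>
      ((x * t / 2) ^ p.1 / (p.1.factorial : ℂ)) * ((-x / (2 * t)) ^ p.2 / (p.2.factorial : ℂ))) :=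
    summable_mul_of_summable_norm (f := fun j : ℕ => (x * t / 2) ^ j / (j.factorial : ℂ))
      (g := fun k : ℕ => (-x / (2 * t)) ^ k / (k.factorial : ℂ)) hn1 hn2
  have hFsum : ∑' p : ℕ × ℕ,
      ((x * t / 2) ^ p.1 / (p.1.factorial : ℂ)) * ((-x / (2 * t)) ^ p.2 / (p.2.factorial : ℂ))
        = Complex.exp (x * (t - t⁻¹) / 2) := by
    rw [← tsum_mul_tsum_of_summable_norm hn1 hn2,
      show Complex.exp (x * (t - t⁻¹) / 2) = Complex.exp (x * t / 2) * Complex.exp (-x / (2 * t))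
        by rw [← Complex.exp_add]; congr 1; field_simp; ring,
      Complex.exp_eq_exp_ℂ, NormedSpace.exp_eq_tsum_div]
  have hFe : Summable (fun q : ℤ × ℕ =>
      ((x * t / 2) ^ (eAux q).1 / (((eAux q).1.factorial : ℂ)))
        * ((-x / (2 * t)) ^ (eAux q).2 / (((eAux q).2.factorial : ℂ)))) :=
    eAux.summable_iff.2 hF
  have hfib : ∀ n : ℤ, Summable fun m : ℕ =>
      ((x * t / 2) ^ (eAux (n, m)).1 / (((eAux (n, m)).1.factorial : ℂ)))
        * ((-x / (2 * t)) ^ (eAux (n, m)).2 / (((eAux (n, m)).2.factorial : ℂ))) := by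
    intro n
    have hinj : Function.Injective (fun m : ℕ => ((n, m) : ℤ × ℕ)) :=
      fun a b h => by simpa using h
    exact hFe.comp_injective hinj
  have key : ∀ n : ℤ, (∑' m : ℕ,
      ((x * t / 2) ^ (eAux (n, m)).1 / (((eAux (n, m)).1.factorial : ℂ)))
        * ((-x / (2 * t)) ^ (eAux (n, m)).2 / (((eAux (n, m)).2.factorial : ℂ))))
      = besselJ n x * t ^ n := by
    intro n
    rcases le_or_gt 0 n with hn | hn
    · set a := n.toNat with ha
      have hna : n = (a : ℤ) := by omega
      have h0 : (-n).toNat = 0 := by omega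
      have : ∀ m : ℕ, (eAux (n, m)) = (m + a, m) := by
        intro m; show (m + n.toNat, m + (-n).toNat) = _; rw [h0]; simp; rfl
      simp only [this]
      rw [besselJ, if_pos hn, hna, zpow_natCast, besselJNat, ← tsum_mul_right]
      refine tsum_congr fun m => ?_
      have h1 : ((m.factorial : ℂ)) ≠ 0 := Nat.cast_ne_zero.2 m.factorial_ne_zero
      have h2 : (((m + a).factorial : ℂ)) ≠ 0 := Nat.cast_ne_zero.2 (m + a).factorial_ne_zero
      simp only [Int.toNat_natCast]
      field_simp
      have ht' : t ^ m * t⁻¹ ^ m = 1 := by rw [← mul_pow, mul_inv_cancel₀ ht, one_pow]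
      rw [show -(x / (t * 2)) = (-1) * (x / 2) * t⁻¹ by field_simp,
        show x * t / 2 = x / 2 * t by ring]
      generalize x / 2 = u
      linear_combination (-1 : ℂ) ^ m * u ^ (2 * m) * u ^ a * t ^ a * ht'
    · set a := n.natAbs with ha
      have hna : n = -(a : ℤ) := by omega
      have h0 : n.toNat = 0 := by omega
      have h0' : (-n).toNat = a := by omega
      have : ∀ m : ℕ, (eAux (n, m)) = (m, m + a) := by
        intro m; show (m + n.toNat, m + (-n).toNat) = _; rw [h0, h0']; simp
      simp only [this]
      rw [besselJ, if_neg (by omega), hna, zpow_neg, zpow_natCast, besselJNat, mul_comm,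
        mul_assoc, ← tsum_mul_right, ← tsum_mul_left]
      refine tsum_congr fun m => ?_
      have h1 : ((m.factorial : ℂ)) ≠ 0 := Nat.cast_ne_zero.2 m.factorial_ne_zero
      have h2 : (((m + a).factorial : ℂ)) ≠ 0 := Nat.cast_ne_zero.2 (m + a).factorial_ne_zero
      simp only [Int.natAbs_neg, Int.natAbs_natCast]
      field_simp
      have ht' : t ^ m * t⁻¹ ^ m = 1 := by rw [← mul_pow, mul_inv_cancel₀ ht, one_pow]
      have ht'' : t ^ a * t⁻¹ ^ a = 1 := by rw [← mul_pow, mul_inv_cancel₀ ht, one_pow]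
      rw [show -(x / (t * 2)) = (-1) * (x / 2) * t⁻¹ by field_simp,
        show t * x / 2 = x / 2 * t by ring]
      generalize x / 2 = u
      linear_combination (-1 : ℂ) ^ (m + a) * u ^ (2 * m + a) * (t ^ a * t⁻¹ ^ a) * ht'
        + (-1 : ℂ) ^ (m + a) * u ^ (2 * m + a) * ht''
  have htot := (eAux.hasSum_iff (f := fun p : ℕ × ℕ =>
      ((x * t / 2) ^ p.1 / (p.1.factorial : ℂ)) * ((-x / (2 * t)) ^ p.2 / (p.2.factorial : ℂ)))).2
      hF.hasSum
  rw [hFsum] at htot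
  exact htot.prod_fiberwise fun n => by rw [← key n]; exact (hfib n).hasSum

lemma zpow_three_aux (b : ℂ) (hb : b ≠ 0) (h3 : b ^ 3 = -1) (q : ℤ) (r : ℕ) :
    b ^ (3 * q + (r : ℤ)) = (-1) ^ q * b ^ r := by
  rw [zpow_add₀ hb, zpow_natCast, zpow_mul, show ((3 : ℤ)) = ((3 : ℕ) : ℤ) by norm_num,
    zpow_natCast, h3]

open scoped Real

lemma zpow_three_mul (b : ℂ) (hb : b ≠ 0) (h3 : b ^ 3 = -1) (q : ℤ) :
    b ^ (3 * q) = (-1) ^ q := by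
  simpa using zpow_three_aux b hb h3 q 0

theorem stmt_10 (x : ℂ) :
    (∑' ν : ℤ, (-1 : ℂ) ^ ν * besselJ (3 * ν) x
        = (1 / 3) * (1 + 2 * Complex.cos (x * (Real.sqrt 3 : ℝ) / 2))) ∧
    (∑' ν : ℤ, (-1 : ℂ) ^ ν * besselJ (3 * ν + 1) x
        = -((1 / 3) * (1 - 2 * Complex.cos (x * (Real.sqrt 3 : ℝ) / 2 - (π : ℂ) / 3)))) := by
  set z : ℂ := ((π / 3 : ℝ) : ℂ) with hz
  set ω : ℂ := Complex.exp (z * Complex.I) with hω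
  set y : ℂ := x * (Real.sqrt 3 : ℝ) / 2 with hy
  have hω0 : ω ≠ 0 := Complex.exp_ne_zero _
  have hωinv : ω⁻¹ = Complex.exp (-(z * Complex.I)) := by rw [hω, ← Complex.exp_neg]
  have hcos : Complex.cos z = ((1 / 2 : ℝ) : ℂ) := by
    rw [hz, ← Complex.ofReal_cos, Real.cos_pi_div_three]
  have hsin : Complex.sin z = ((Real.sqrt 3 / 2 : ℝ) : ℂ) := by
    rw [hz, ← Complex.ofReal_sin, Real.sin_pi_div_three]
  have hωval : ω = Complex.cos z + Complex.sin z * Complex.I := by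
    rw [hω]; exact Complex.exp_mul_I z
  have hωinvval : ω⁻¹ = Complex.cos z - Complex.sin z * Complex.I := by
    rw [hωinv, show -(z * Complex.I) = (-z) * Complex.I by ring, Complex.exp_mul_I,
      Complex.cos_neg, Complex.sin_neg]; ring
  have hB : ω * ω⁻¹ = 1 := mul_inv_cancel₀ hω0
  have hsum1 : ω + ω⁻¹ = 1 := by
    rw [hωinvval, hωval, hcos]; push_cast; ring
  have hsq : ω ^ 2 + (ω⁻¹) ^ 2 = -1 := by
    linear_combination (ω + ω⁻¹ + 1) * hsum1 - 2 * hB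
  have hdiff : ω - ω⁻¹ = ((Real.sqrt 3 : ℝ) : ℂ) * Complex.I := by
    rw [hωinvval, hωval, hsin]; push_cast; ring
  have hz3 : z = (π : ℂ) / 3 := by rw [hz]; push_cast; ring
  have hω3 : ω ^ 3 = -1 := by
    rw [hω, ← Complex.exp_nat_mul,
      show ((3 : ℕ) : ℂ) * (z * Complex.I) = (π : ℂ) * Complex.I by rw [hz3]; push_cast; ring,
      Complex.exp_pi_mul_I]
  have hωinv3 : (ω⁻¹) ^ 3 = -1 := by rw [inv_pow, hω3]; norm_num
  have hm3 : (-1 : ℂ) ^ 3 = -1 := by norm_num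
  have hm0 : (-1 : ℂ) ≠ 0 := by norm_num
  have hωinv0 : ω⁻¹ ≠ 0 := inv_ne_zero hω0
  -- the three generating-function sums
  have hA : x * (ω - ω⁻¹) / 2 = y * Complex.I := by rw [hdiff, hy]; ring
  have hC : x * (ω⁻¹ - (ω⁻¹)⁻¹) / 2 = -(y * Complex.I) := by
    rw [inv_inv, show x * (ω⁻¹ - ω) / 2 = -(x * (ω - ω⁻¹) / 2) by ring, hA]
  have hSω : HasSum (fun n : ℤ => besselJ n x * ω ^ n) (Complex.exp (y * Complex.I)) := by
    have := besselJ_hasSum x ω hω0; rwa [hA] at this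
  have hSm : HasSum (fun n : ℤ => besselJ n x * (-1 : ℂ) ^ n) 1 := by
    have := besselJ_hasSum x (-1) hm0
    rwa [show x * ((-1 : ℂ) - (-1 : ℂ)⁻¹) / 2 = 0 by norm_num, Complex.exp_zero] at this
  have hSω' : HasSum (fun n : ℤ => besselJ n x * (ω⁻¹) ^ n)
      (Complex.exp (-(y * Complex.I))) := by
    have := besselJ_hasSum x ω⁻¹ hωinv0; rwa [hC] at this
  have hinj0 : Function.Injective (fun ν : ℤ => 3 * ν) := fun a b h => by
    simp only at h; omega
  have hinj1 : Function.Injective (fun ν : ℤ => 3 * ν + 1) := fun a b h => by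
    simp only at h; omega
  constructor
  · -- Part 1
    have hadd := (hSω.add hSm).add hSω'
    rw [show (fun n : ℤ => (besselJ n x * ω ^ n + besselJ n x * (-1 : ℂ) ^ n)
          + besselJ n x * (ω⁻¹) ^ n)
        = fun n : ℤ => besselJ n x * (ω ^ n + (-1 : ℂ) ^ n + (ω⁻¹) ^ n)
      from funext fun n => by ring] at hadd
    have hvan : ∀ n : ℤ, n ∉ Set.range (fun ν : ℤ => 3 * ν) →
        besselJ n x * (ω ^ n + (-1 : ℂ) ^ n + (ω⁻¹) ^ n) = 0 := by
      intro n hn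
      have h0 : n % 3 ≠ 0 := fun h => hn ⟨n / 3, by show 3 * (n / 3) = n; omega⟩
      have hmod : n % 3 = 1 ∨ n % 3 = 2 := by omega
      rcases hmod with h | h
      · have hq : n = 3 * (n / 3) + ((1 : ℕ) : ℤ) := by push_cast; omega
        rw [hq, zpow_three_aux ω hω0 hω3, zpow_three_aux (-1) hm0 hm3,
          zpow_three_aux ω⁻¹ hωinv0 hωinv3]
        linear_combination (besselJ (3 * (n / 3) + ((1 : ℕ) : ℤ)) x
          * (-1 : ℂ) ^ (n / 3)) * hsum1
      · have hq : n = 3 * (n / 3) + ((2 : ℕ) : ℤ) := by push_cast; omega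
        rw [hq, zpow_three_aux ω hω0 hω3, zpow_three_aux (-1) hm0 hm3,
          zpow_three_aux ω⁻¹ hωinv0 hωinv3]
        linear_combination (besselJ (3 * (n / 3) + ((2 : ℕ) : ℤ)) x
          * (-1 : ℂ) ^ (n / 3)) * hsq
    have hfil := Function.Injective.tsum_eq hinj0
      (f := fun n : ℤ => besselJ n x * (ω ^ n + (-1 : ℂ) ^ n + (ω⁻¹) ^ n))
      (fun n hn => by by_contra h; exact hn (hvan n h))
    have hterm : ∀ ν : ℤ, besselJ (3 * ν) x
          * (ω ^ (3 * ν) + (-1 : ℂ) ^ (3 * ν) + (ω⁻¹) ^ (3 * ν))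
        = 3 * ((-1 : ℂ) ^ ν * besselJ (3 * ν) x) := by
      intro ν
      rw [zpow_three_mul ω hω0 hω3, zpow_three_mul (-1) hm0 hm3,
        zpow_three_mul ω⁻¹ hωinv0 hωinv3]
      ring
    have htot : (3 : ℂ) * ∑' ν : ℤ, (-1 : ℂ) ^ ν * besselJ (3 * ν) x
        = Complex.exp (y * Complex.I) + 1 + Complex.exp (-(y * Complex.I)) := by
      rw [← tsum_mul_left, ← hadd.tsum_eq, ← hfil]
      exact tsum_congr fun ν => (hterm ν).symm
    rw [show (∑' ν : ℤ, (-1 : ℂ) ^ ν * besselJ (3 * ν) x)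
        = (1 / 3) * ((3 : ℂ) * ∑' ν : ℤ, (-1 : ℂ) ^ ν * besselJ (3 * ν) x) by ring,
      htot]
    rw [show (1 : ℂ) + 2 * Complex.cos y = 1 + (Complex.exp (y * Complex.I)
        + Complex.exp (-y * Complex.I)) by rw [Complex.two_cos]]
    ring
  · -- Part 2
    have hadd := ((hSω.mul_left ω⁻¹).add (hSm.mul_left (-1))).add (hSω'.mul_left ω)
    rw [show (fun n : ℤ => (ω⁻¹ * (besselJ n x * ω ^ n)
            + -1 * (besselJ n x * (-1 : ℂ) ^ n)) + ω * (besselJ n x * (ω⁻¹) ^ n))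
        = fun n : ℤ => besselJ n x
            * (ω⁻¹ * ω ^ n + -1 * (-1 : ℂ) ^ n + ω * (ω⁻¹) ^ n)
      from funext fun n => by ring] at hadd
    have hvan : ∀ n : ℤ, n ∉ Set.range (fun ν : ℤ => 3 * ν + 1) →
        besselJ n x * (ω⁻¹ * ω ^ n + -1 * (-1 : ℂ) ^ n + ω * (ω⁻¹) ^ n) = 0 := by
      intro n hn
      have h0 : n % 3 ≠ 1 := fun h => hn ⟨n / 3, by show 3 * (n / 3) + 1 = n; omega⟩
      have hmod : n % 3 = 0 ∨ n % 3 = 2 := by omega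
      rcases hmod with h | h
      · have hq : n = 3 * (n / 3) + ((0 : ℕ) : ℤ) := by push_cast; omega
        rw [hq, zpow_three_aux ω hω0 hω3, zpow_three_aux (-1) hm0 hm3,
          zpow_three_aux ω⁻¹ hωinv0 hωinv3]
        linear_combination (besselJ (3 * (n / 3) + ((0 : ℕ) : ℤ)) x
          * (-1 : ℂ) ^ (n / 3)) * hsum1
      · have hq : n = 3 * (n / 3) + ((2 : ℕ) : ℤ) := by push_cast; omega
        rw [hq, zpow_three_aux ω hω0 hω3, zpow_three_aux (-1) hm0 hm3,
          zpow_three_aux ω⁻¹ hωinv0 hωinv3]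
        set K : ℂ := besselJ (3 * (n / 3) + ((2 : ℕ) : ℤ)) x * (-1 : ℂ) ^ (n / 3) with hK
        linear_combination (K * (ω + ω⁻¹)) * hB + K * hsum1
    have hfil := Function.Injective.tsum_eq hinj1
      (f := fun n : ℤ => besselJ n x * (ω⁻¹ * ω ^ n + -1 * (-1 : ℂ) ^ n + ω * (ω⁻¹) ^ n))
      (fun n hn => by by_contra h; exact hn (hvan n h))
    have hterm : ∀ ν : ℤ, besselJ (3 * ν + 1) x
          * (ω⁻¹ * ω ^ (3 * ν + 1) + -1 * (-1 : ℂ) ^ (3 * ν + 1)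
            + ω * (ω⁻¹) ^ (3 * ν + 1))
        = 3 * ((-1 : ℂ) ^ ν * besselJ (3 * ν + 1) x) := by
      intro ν
      rw [show (3 * ν + 1 : ℤ) = 3 * ν + ((1 : ℕ) : ℤ) by push_cast; ring,
        zpow_three_aux ω hω0 hω3, zpow_three_aux (-1) hm0 hm3,
        zpow_three_aux ω⁻¹ hωinv0 hωinv3]
      set K : ℂ := besselJ (3 * ν + ((1 : ℕ) : ℤ)) x * (-1 : ℂ) ^ ν with hK
      linear_combination (2 * K) * hB
    have htot : (3 : ℂ) * ∑' ν : ℤ, (-1 : ℂ) ^ ν * besselJ (3 * ν + 1) x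
        = ω⁻¹ * Complex.exp (y * Complex.I) + -1 * 1
          + ω * Complex.exp (-(y * Complex.I)) := by
      rw [← tsum_mul_left, ← hadd.tsum_eq, ← hfil]
      exact tsum_congr fun ν => (hterm ν).symm
    have hw1 : Complex.exp ((y - (π : ℂ) / 3) * Complex.I)
        = Complex.exp (y * Complex.I) * ω⁻¹ := by
      rw [hωinv, ← Complex.exp_add]
      congr 1
      rw [hz3]; ring
    have hw2 : Complex.exp (-((y - (π : ℂ) / 3) * Complex.I))
        = Complex.exp (-(y * Complex.I)) * ω := by
      rw [hω, ← Complex.exp_add]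
      congr 1
      rw [hz3]; ring
    rw [show (∑' ν : ℤ, (-1 : ℂ) ^ ν * besselJ (3 * ν + 1) x)
        = (1 / 3) * ((3 : ℂ) * ∑' ν : ℤ, (-1 : ℂ) ^ ν * besselJ (3 * ν + 1) x) by ring,
      htot]
    rw [show (2 : ℂ) * Complex.cos (y - (π : ℂ) / 3)
        = Complex.exp ((y - (π : ℂ) / 3) * Complex.I)
          + Complex.exp (-(y - (π : ℂ) / 3) * Complex.I) by rw [Complex.two_cos],
      show Complex.exp (-(y - (π : ℂ) / 3) * Complex.I)
        = Complex.exp (-((y - (π : ℂ) / 3) * Complex.I)) by rw [neg_mul],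
      hw1, hw2]
    ring
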